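/- Let d ≥ 1 and let G be a finite simple graph on at least 3 vertices that admits a d-dimensional unit ball realisation. Then there are infinitely many d-dimensional unit ball realisations of G modulo isometries and scalings; that is, there exists a sequence ρ_0, ρ_1, ρ_2, … of d-dimensional unit ball realisations of G such that for all k ≠ l there is no constant c > 0 and no isometry f of ℝ^d with ρ_l(v) = c · f(ρ_k(v)) for all vertices v. -/

import Mathlib

set_option maxHeartbeats 1000000

private lemma aux_dir_norm {E : Type*} [NormedAddCommGroup E] [NormedSpace ℝ E] [DecidableEq E]
    (a b e : E) (he : ‖e‖ = 1) :
    ‖(if a = b then e else ‖a - b‖⁻¹ • (a - b))‖ = 1 := by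
  split_ifs with h
  · exact he
  · have hr : ‖a - b‖ ≠ 0 := by simpa [sub_eq_zero] using h
    rw [norm_smul, norm_inv, norm_norm, inv_mul_cancel₀ hr]

private lemma aux_norm_shift {E : Type*} [NormedAddCommGroup E] [NormedSpace ℝ E] [DecidableEq E]
    (a b e : E) (he : ‖e‖ = 1) (ε : ℝ) (hε : 0 ≤ ε) :
    ‖a + ε • (if a = b then e else ‖a - b‖⁻¹ • (a - b)) - b‖ = ‖a - b‖ + ε := by
  split_ifs with h
  · subst h
    simp [norm_smul, abs_of_nonneg hε, he]
  · have hr : (0:ℝ) < ‖a - b‖ := by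
      simpa [norm_pos_iff, sub_eq_zero] using h
    have h1 : a + ε • (‖a - b‖⁻¹ • (a - b)) - b = (1 + ε * ‖a - b‖⁻¹) • (a - b) := by
      rw [smul_smul]; module
    rw [h1, norm_smul, Real.norm_eq_abs, abs_of_nonneg (by positivity)]
    field_simp

/-- A `d`-dimensional unit ball realisation of a simple graph `G`: edges are at distance
at most 1, non-edges (between distinct vertices) are at distance greater than 1. -/
def IsUnitBallRealisation {V : Type*} (G : SimpleGraph V) (d : ℕ)
    (ρ : V → EuclideanSpace ℝ (Fin d)) : Prop :=
  ∀ v w : V, v ≠ w →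
    (G.Adj v w → ‖ρ v - ρ w‖ ≤ 1) ∧ (¬ G.Adj v w → 1 < ‖ρ v - ρ w‖)

/-- A unit ball graph on at least 3 vertices has infinitely many unit ball realisations
modulo isometries and scalings: there is a sequence of unit ball realisations no two of
which agree up to a positive scaling composed with an isometry of `ℝ^d`. -/
theorem infinitely_many_unit_ball_realisations
    {V : Type*} [Fintype V] (G : SimpleGraph V) (d : ℕ) (hd : 1 ≤ d)
    (hV : 3 ≤ Fintype.card V)
    (h : ∃ ρ : V → EuclideanSpace ℝ (Fin d), IsUnitBallRealisation G d ρ) :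
    ∃ ρ : ℕ → V → EuclideanSpace ℝ (Fin d),
      (∀ k, IsUnitBallRealisation G d (ρ k)) ∧
      ∀ k l, k ≠ l →
        ¬ ∃ (c : ℝ) (f : EuclideanSpace ℝ (Fin d) ≃ᵢ EuclideanSpace ℝ (Fin d)),
          0 < c ∧ ∀ v, ρ l v = c • f (ρ k v) := by
  classical
  obtain ⟨ρ, hρ⟩ := h
  -- three distinct vertices
  obtain ⟨v0, v1, hv01⟩ := Fintype.exists_pair_of_one_lt_card (α := V) (by omega)
  obtain ⟨v2, hv2⟩ : ∃ v2 : V, v2 ∉ ({v0, v1} : Finset V) := by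
    by_contra hc
    push_neg at hc
    have hsub : (Finset.univ : Finset V) ⊆ {v0, v1} := fun v _ => hc v
    have h1 := Finset.card_le_card hsub
    have h2 : ({v0, v1} : Finset V).card ≤ 2 :=
      (Finset.card_insert_le _ _).trans (by simp)
    rw [Finset.card_univ] at h1
    omega
  have hv20 : v2 ≠ v0 := by simp at hv2; tauto
  have hv21 : v2 ≠ v1 := by simp at hv2; tauto
  -- the minimum non-edge distance bound m
  set Q : Finset ℝ := insert 2 (((Finset.univ : Finset (V × V)).filter
      (fun p : V × V => p.1 ≠ p.2 ∧ ¬ G.Adj p.1 p.2)).image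
      (fun p => ‖ρ p.1 - ρ p.2‖)) with hQ
  have hQne : Q.Nonempty := ⟨2, Finset.mem_insert_self _ _⟩
  set m := Q.min' hQne with hm
  have hQgt : ∀ x ∈ Q, 1 < x := by
    intro x hx
    rw [hQ] at hx
    rcases Finset.mem_insert.mp hx with h2 | h2
    · rw [h2]; norm_num
    · obtain ⟨p, hp, hpe⟩ := Finset.mem_image.mp h2
      simp only [Finset.mem_filter] at hp
      rw [← hpe]
      exact (hρ p.1 p.2 hp.2.1).2 hp.2.2
  have hm1 : 1 < m := hQgt _ (Q.min'_mem hQne)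
  have hmle : ∀ v w : V, v ≠ w → ¬ G.Adj v w → m ≤ ‖ρ v - ρ w‖ := by
    intro v w hne hna
    apply Q.min'_le
    rw [hQ]
    refine Finset.mem_insert_of_mem (Finset.mem_image.mpr ⟨(v, w), ?_, rfl⟩)
    simp [hne, hna]
  set t : ℝ := (m + 1) / (2 * m) with ht
  set δ : ℝ := (m - 1) / (4 * m) with hδ
  have hm0 : (0:ℝ) < m := by linarith
  have ht0 : 0 < t := by rw [ht]; positivity
  have hδ0 : 0 < δ := by
    rw [hδ]; exact div_pos (by linarith) (by linarith)
  have hkey1 : t + δ < 1 := by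
    rw [ht, hδ, div_add_div _ _ (ne_of_gt (by linarith : (0:ℝ) < 2 * m))
      (ne_of_gt (by linarith : (0:ℝ) < 4 * m)), div_lt_one (by nlinarith)]
    nlinarith
  have hkey2 : 1 < t * m - δ := by
    have htm : t * m = (m + 1) / 2 := by rw [ht]; field_simp
    rw [htm, hδ, div_sub_div _ _ (by norm_num : (2:ℝ) ≠ 0)
      (ne_of_gt (by linarith : (0:ℝ) < 4 * m)), lt_div_iff₀ (by nlinarith)]
    nlinarith
  -- scaled realisation
  set ρ' : V → EuclideanSpace ℝ (Fin d) := fun v => t • ρ v with hρ'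
  have hρ'dist : ∀ v w : V, ‖ρ' v - ρ' w‖ = t * ‖ρ v - ρ w‖ := by
    intro v w
    rw [hρ']
    simp only [← smul_sub, norm_smul, Real.norm_eq_abs, abs_of_pos ht0]
  -- the unit vector e
  set e : EuclideanSpace ℝ (Fin d) := EuclideanSpace.single (⟨0, by omega⟩ : Fin d) (1:ℝ) with he
  have hnorme : ‖e‖ = 1 := by rw [he, EuclideanSpace.norm_single]; norm_num
  -- perturb v1 if needed so it differs from v2
  set η : ℝ := if ρ' v1 = ρ' v2 then δ / 2 else 0 with hη
  set b : EuclideanSpace ℝ (Fin d) := ρ' v1 + η • e with hb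
  have hη0 : 0 ≤ η := by
    rw [hη]; split_ifs
    · positivity
    · exact le_refl _
  have hηle : η ≤ δ / 2 := by
    rw [hη]; split_ifs
    · exact le_refl _
    · positivity
  have hbne : b ≠ ρ' v2 := by
    rw [hb, hη]
    split_ifs with h12
    · rw [h12]
      intro hc
      have : (δ / 2) • e = 0 := by
        have := sub_eq_zero.mpr hc
        rw [add_sub_cancel_left] at this
        exact this
      have := congrArg norm this
      rw [norm_smul, hnorme, norm_zero, Real.norm_eq_abs, abs_of_pos (by positivity)] at this
      simp at this
      linarith
    · simpa using h12
  set a : EuclideanSpace ℝ (Fin d) := ρ' v0 with ha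
  set u : EuclideanSpace ℝ (Fin d) := if a = b then e else ‖a - b‖⁻¹ • (a - b) with hu
  have hnormu : ‖u‖ = 1 := aux_dir_norm a b e hnorme
  set ε : ℕ → ℝ := fun k => δ / (k + 2) with hε
  have hε0 : ∀ k, 0 < ε k := by
    intro k; rw [hε]; positivity
  have hεle : ∀ k, ε k ≤ δ / 2 := by
    intro k
    rw [hε]
    have hk : (0:ℝ) ≤ (k:ℝ) := Nat.cast_nonneg k
    rw [div_le_div_iff₀ (by linarith) (by norm_num)]
    nlinarith
  set ρs : ℕ → V → EuclideanSpace ℝ (Fin d) := fun k v =>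
    if v = v0 then a + ε k • u else if v = v1 then b else ρ' v with hρs
  -- pointwise perturbation bound
  have hpert : ∀ k v, ‖ρs k v - ρ' v‖ ≤ δ / 2 := by
    intro k v
    rw [hρs]
    dsimp only
    split_ifs with h0 h1
    · subst h0
      rw [ha, add_sub_cancel_left, norm_smul, hnormu, mul_one, Real.norm_eq_abs,
        abs_of_pos (hε0 k)]
      exact hεle k
    · subst h1
      rw [hb, add_sub_cancel_left, norm_smul, hnorme, mul_one, Real.norm_eq_abs,
        abs_of_nonneg hη0]
      exact hηle
    · rw [sub_self, norm_zero]; linarith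
  -- distance perturbation bound
  have hdistpert : ∀ k (v w : V), |‖ρs k v - ρs k w‖ - t * ‖ρ v - ρ w‖| ≤ δ := by
    intro k v w
    rw [← hρ'dist]
    have h1 : |‖ρs k v - ρs k w‖ - ‖ρ' v - ρ' w‖| ≤ ‖(ρs k v - ρs k w) - (ρ' v - ρ' w)‖ :=
      abs_norm_sub_norm_le _ _
    have h2 : (ρs k v - ρs k w) - (ρ' v - ρ' w) = (ρs k v - ρ' v) - (ρs k w - ρ' w) := by
      abel
    have h3 : ‖(ρs k v - ρ' v) - (ρs k w - ρ' w)‖ ≤ ‖ρs k v - ρ' v‖ + ‖ρs k w - ρ' w‖ :=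
      norm_sub_le _ _
    have h4 := hpert k v
    have h5 := hpert k w
    rw [h2] at h1
    linarith
  -- each ρs k is a realisation
  have hreal : ∀ k, IsUnitBallRealisation G d (ρs k) := by
    intro k v w hvw
    have hdp := hdistpert k v w
    rw [abs_le] at hdp
    constructor
    · intro hadj
      have hle : ‖ρ v - ρ w‖ ≤ 1 := (hρ v w hvw).1 hadj
      have : t * ‖ρ v - ρ w‖ ≤ t := by nlinarith
      linarith [hdp.2]
    · intro hna
      have hge : m ≤ ‖ρ v - ρ w‖ := hmle v w hvw hna
      have : t * m ≤ t * ‖ρ v - ρ w‖ := by nlinarith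
      linarith [hdp.1]
  refine ⟨ρs, hreal, ?_⟩
  intro k l hkl ⟨c, f, hc, hcf⟩
  have hdist : ∀ x y : V, ‖ρs l x - ρs l y‖ = c * ‖ρs k x - ρs k y‖ := by
    intro x y
    rw [hcf x, hcf y, ← smul_sub, norm_smul, Real.norm_eq_abs, abs_of_pos hc]
    congr 1
    have := f.dist_eq (ρs k x) (ρs k y)
    rwa [dist_eq_norm, dist_eq_norm] at this
  -- the fixed pair (v1, v2)
  have hρsv1 : ∀ j, ρs j v1 = b := by
    intro j; rw [hρs]; simp [hv01.symm]
  have hρsv2 : ∀ j, ρs j v2 = ρ' v2 := by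
    intro j; rw [hρs]; simp [hv20, hv21]
  have hs0 : (0:ℝ) < ‖b - ρ' v2‖ := by
    rw [norm_pos_iff, sub_ne_zero]; exact hbne
  have hc1 : c = 1 := by
    have := hdist v1 v2
    rw [hρsv1, hρsv1, hρsv2, hρsv2] at this
    nlinarith
  -- the varying pair (v0, v1)
  have hρsv0 : ∀ j, ρs j v0 = a + ε j • u := by
    intro j; rw [hρs]; simp
  have hvar : ∀ j, ‖ρs j v0 - ρs j v1‖ = ‖a - b‖ + ε j := by
    intro j
    rw [hρsv0, hρsv1, hu]
    exact aux_norm_shift a b e hnorme (ε j) (hε0 j).le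
  have hfinal := hdist v0 v1
  rw [hvar, hvar, hc1, one_mul] at hfinal
  have hεeq : ε l = ε k := by linarith
  have hkeq : k = l := by
    rw [hε] at hεeq
    field_simp at hεeq
    exact_mod_cast (by linarith : (k:ℝ) = l)
  exact hkl hkeq
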